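/- There is an R-algebra isomorphism from the skew Hecke algebra H_R(G,H,A,α) onto the opposite algebra End_{A⋊G}(A[G/H])^op of the endomorphism ring of the A⋊G-module A[G/H], given by Φ ↦ Φ(1_A·H). -/

import Mathlib

open scoped BigOperators

/-- The action of `g ∈ G` on `A[G/H]`, determined by `b·kH ↦ α_g(b)·(gkH)`.
Together with the `A`-module structure this is the `A ⋊ G`-module structure
`(a ⊗ g)·(b·kH) = a α_g(b)·(gkH)` on `A[G/H]`. -/
noncomputable def SkewHecke.gAct {R A G : Type*} [CommRing R] [Ring A] [Algebra R A]
    [Group G] (H : Subgroup G) (α : G →* (A ≃ₐ[R] A)) (g : G)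
    (m : (G ⧸ H) →₀ A) : (G ⧸ H) →₀ A :=
  m.sum fun c a => Finsupp.single (g • c) (α g a)

/-- The skew Hecke product on `A[G/H]^H`:
`(Σ a_{gH} gH)(Σ b_{kH} kH) = Σ a_{gH} α_g(b_{kH}) (gkH)`. -/
noncomputable def SkewHecke.prodF {R A G : Type*} [CommRing R] [Ring A] [Algebra R A]
    [Group G] (H : Subgroup G) [Fintype (G ⧸ H)] (α : G →* (A ≃ₐ[R] A))
    (s : G ⧸ H → G) (m n : (G ⧸ H) →₀ A) : (G ⧸ H) →₀ A :=
  ∑ c : G ⧸ H, ∑ d : G ⧸ H, Finsupp.single ((s c) • d) (m c * α (s c) (n d))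

def SkewHecke.IsSection {G : Type*} [Group G] {H : Subgroup G} (s : G ⧸ H → G) : Prop :=
  ∀ c : G ⧸ H, QuotientGroup.mk (s c) = c

namespace SkewHecke

variable {R A G : Type*} [CommRing R] [Ring A] [Algebra R A] [Group G]
  (H : Subgroup G) (α : G →* (A ≃ₐ[R] A))

lemma gAct_single (g : G) (c : G ⧸ H) (a : A) :
    gAct H α g (Finsupp.single c a) = Finsupp.single (g • c) (α g a) := by
  classical
  rw [gAct, Finsupp.sum_single_index]
  simp

lemma gAct_zero (g : G) : gAct H α g 0 = 0 := by simp [gAct]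

lemma gAct_add (g : G) (m n : (G ⧸ H) →₀ A) :
    gAct H α g (m + n) = gAct H α g m + gAct H α g n := by
  classical
  unfold gAct
  rw [Finsupp.sum_add_index'] <;> simp [map_add, Finsupp.single_add]

lemma gAct_finsetSum {ι : Type*} (g : G) (t : Finset ι) (f : ι → (G ⧸ H) →₀ A) :
    gAct H α g (∑ i ∈ t, f i) = ∑ i ∈ t, gAct H α g (f i) := by
  classical
  induction t using Finset.cons_induction with
  | empty => simp [gAct_zero]
  | cons i t hi ih => rw [Finset.sum_cons, Finset.sum_cons, gAct_add, ih]

lemma gAct_smul (g : G) (a : A) (m : (G ⧸ H) →₀ A) :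
    gAct H α g (a • m) = α g a • gAct H α g m := by
  classical
  induction m using Finsupp.induction with
  | zero => simp [gAct_zero]
  | single_add c b f _ _ ih =>
    rw [smul_add, gAct_add, gAct_add, smul_add, ih, Finsupp.smul_single, gAct_single,
      gAct_single, Finsupp.smul_single, smul_eq_mul, smul_eq_mul, map_mul]

lemma gAct_gAct (g k : G) (m : (G ⧸ H) →₀ A) :
    gAct H α g (gAct H α k m) = gAct H α (g * k) m := by
  classical
  induction m using Finsupp.induction with
  | zero => simp [gAct_zero]
  | single_add c b f _ _ ih =>
    rw [gAct_add, gAct_add, gAct_add, ih, gAct_single, gAct_single, gAct_single,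
      smul_smul, map_mul, AlgEquiv.mul_apply]

lemma gAct_one (m : (G ⧸ H) →₀ A) : gAct H α 1 m = m := by
  classical
  unfold gAct
  simp only [one_smul, map_one, AlgEquiv.one_apply]
  exact Finsupp.sum_single m

lemma gAct_eq_of_mk_eq {m : (G ⧸ H) →₀ A} (hm : ∀ h ∈ H, gAct H α h m = m) {g t : G}
    (h : (QuotientGroup.mk g : G ⧸ H) = QuotientGroup.mk t) :
    gAct H α g m = gAct H α t m := by
  have hH : t⁻¹ * g ∈ H := QuotientGroup.eq.mp h.symm
  have hg : g = t * (t⁻¹ * g) := by group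
  rw [hg, ← gAct_gAct, hm _ hH]

lemma gAct_fintypeSum [Fintype (G ⧸ H)] (g : G) (m : (G ⧸ H) →₀ A) :
    gAct H α g m = ∑ d : G ⧸ H, Finsupp.single (g • d) (α g (m d)) := by
  classical
  rw [gAct, Finsupp.sum_fintype]
  intro d; simp

lemma eq_sum_single [Fintype (G ⧸ H)] (m : (G ⧸ H) →₀ A) :
    m = ∑ c : G ⧸ H, Finsupp.single c (m c) := by
  classical
  conv_lhs => rw [← Finsupp.sum_single m]
  rw [Finsupp.sum_fintype]
  intro c; simp

/-- `Φ` evaluated on a single, for equivariant `Φ`. -/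
lemma apply_single {s : G ⧸ H → G} (hs : IsSection s)
    (Φ : ((G ⧸ H) →₀ A) →ₗ[A] ((G ⧸ H) →₀ A))
    (hΦ : ∀ (g : G) (m : (G ⧸ H) →₀ A), Φ (gAct H α g m) = gAct H α g (Φ m))
    (c : G ⧸ H) (a : A) :
    Φ (Finsupp.single c a) =
      a • gAct H α (s c) (Φ (Finsupp.single (QuotientGroup.mk (1 : G)) (1 : A))) := by
  have h1 : Finsupp.single c (1 : A) =
      gAct H α (s c) (Finsupp.single (QuotientGroup.mk (1 : G)) (1 : A)) := by
    rw [gAct_single, map_one]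
    congr 1
    rw [MulAction.Quotient.smul_mk, smul_eq_mul, mul_one, hs c]
  calc Φ (Finsupp.single c a) = Φ (a • Finsupp.single c (1 : A)) := by
        rw [Finsupp.smul_single, smul_eq_mul, mul_one]
    _ = a • Φ (Finsupp.single c (1 : A)) := Φ.map_smul a _
    _ = _ := by rw [h1, hΦ]

/-- The endomorphism associated to an invariant element. -/
noncomputable def mkEnd [Fintype (G ⧸ H)] (s : G ⧸ H → G) (m : (G ⧸ H) →₀ A) :
    ((G ⧸ H) →₀ A) →ₗ[A] ((G ⧸ H) →₀ A) where
  toFun n := ∑ c : G ⧸ H, n c • gAct H α (s c) m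
  map_add' x y := by simp [add_smul, Finset.sum_add_distrib]
  map_smul' a x := by simp [Finset.smul_sum, mul_smul]

lemma mkEnd_single [Fintype (G ⧸ H)] (s : G ⧸ H → G) (m : (G ⧸ H) →₀ A) (c : G ⧸ H) (a : A) :
    mkEnd H α s m (Finsupp.single c a) = a • gAct H α (s c) m := by
  classical
  simp only [mkEnd, LinearMap.coe_mk, AddHom.coe_mk]
  rw [Finset.sum_eq_single c]
  · simp
  · intro d _ hd
    rw [Finsupp.single_apply, if_neg (Ne.symm hd), zero_smul]
  · simp

lemma mkEnd_equivariant [Fintype (G ⧸ H)] {s : G ⧸ H → G} (hs : IsSection s)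
    {m : (G ⧸ H) →₀ A} (hm : ∀ h ∈ H, gAct H α h m = m) (g : G) (n : (G ⧸ H) →₀ A) :
    mkEnd H α s m (gAct H α g n) = gAct H α g (mkEnd H α s m n) := by
  classical
  rw [gAct_fintypeSum H α g n, map_sum]
  have hrhs : gAct H α g (mkEnd H α s m n) = ∑ c : G ⧸ H, α g (n c) • gAct H α (g * s c) m := by
    simp only [mkEnd, LinearMap.coe_mk, AddHom.coe_mk]
    rw [gAct_finsetSum]
    refine Finset.sum_congr rfl fun c _ => ?_
    rw [gAct_smul, gAct_gAct]
  rw [hrhs]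
  refine Finset.sum_congr rfl fun d _ => ?_
  rw [mkEnd_single]
  congr 1
  refine gAct_eq_of_mk_eq H α hm ?_
  rw [hs (g • d)]
  conv_lhs => rw [← hs d]
  rw [MulAction.Quotient.smul_mk, smul_eq_mul]

lemma mkEnd_e [Fintype (G ⧸ H)] {s : G ⧸ H → G} (hs : IsSection s)
    {m : (G ⧸ H) →₀ A} (hm : ∀ h ∈ H, gAct H α h m = m) :
    mkEnd H α s m (Finsupp.single (QuotientGroup.mk (1 : G)) (1 : A)) = m := by
  rw [mkEnd_single, one_smul]
  have h1 : (QuotientGroup.mk (s (QuotientGroup.mk (1 : G))) : G ⧸ H) = QuotientGroup.mk 1 :=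
    hs _
  rw [gAct_eq_of_mk_eq H α hm h1, gAct_one]

end SkewHecke

/-- The map `Φ ↦ Φ(1_A·H)` is an `R`-algebra isomorphism from the skew Hecke algebra,
realised as `A[G/H]^H` with the product `prodF`, onto `End_{A⋊G}(A[G/H])^op`; the
`A ⋊ G`-linear endomorphisms of `A[G/H]` are the `A`-linear `G`-equivariant ones. -/
theorem skewHecke_iso_endomorphism_algebra_op {R A G : Type*} [CommRing R] [Ring A]
    [Algebra R A] [Group G] (H : Subgroup G) [Fintype (G ⧸ H)]
    (α : G →* (A ≃ₐ[R] A)) (s : G ⧸ H → G) (hs : SkewHecke.IsSection s) :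
    let e : (((G ⧸ H) →₀ A) →ₗ[A] ((G ⧸ H) →₀ A)) → ((G ⧸ H) →₀ A) :=
      fun Φ => Φ (Finsupp.single (QuotientGroup.mk (1 : G)) (1 : A))
    -- `e` is a bijection from `End_{A⋊G}(A[G/H])` onto the `H`-invariants `A[G/H]^H`
    Set.BijOn e {Φ | ∀ (g : G) (m : (G ⧸ H) →₀ A),
        Φ (SkewHecke.gAct H α g m) = SkewHecke.gAct H α g (Φ m)}
      {m | ∀ h ∈ H, SkewHecke.gAct H α h m = m} ∧
    -- `e` is `R`-linear
    (∀ Φ Ψ : ((G ⧸ H) →₀ A) →ₗ[A] ((G ⧸ H) →₀ A), e (Φ + Ψ) = e Φ + e Ψ) ∧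
    -- `e` reverses products: it is an isomorphism onto the *opposite* algebra
    (∀ Φ Ψ : ((G ⧸ H) →₀ A) →ₗ[A] ((G ⧸ H) →₀ A),
      (∀ (g : G) (m : (G ⧸ H) →₀ A),
        Φ (SkewHecke.gAct H α g m) = SkewHecke.gAct H α g (Φ m)) →
      (∀ (g : G) (m : (G ⧸ H) →₀ A),
        Ψ (SkewHecke.gAct H α g m) = SkewHecke.gAct H α g (Ψ m)) →
      e (Ψ.comp Φ) = SkewHecke.prodF H α s (e Φ) (e Ψ)) ∧
    -- `e` is unital
    e LinearMap.id = Finsupp.single (QuotientGroup.mk (1 : G)) (1 : A) := by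
  intro e
  have e0 : ((G ⧸ H) →₀ A) := Finsupp.single (QuotientGroup.mk (1 : G)) (1 : A)
  refine ⟨⟨?_, ?_, ?_⟩, ?_, ?_, rfl⟩
  · -- maps to invariants
    intro Φ hΦ h hH
    show SkewHecke.gAct H α h (Φ _) = Φ _
    rw [← hΦ h]
    congr 1
    rw [SkewHecke.gAct_single, map_one]
    congr 1
    rw [MulAction.Quotient.smul_mk, smul_eq_mul, mul_one]
    exact QuotientGroup.eq.mpr (by simpa using H.inv_mem hH)
  · -- injective
    intro Φ hΦ Ψ hΨ hEq
    have h' : Φ (Finsupp.single (QuotientGroup.mk (1 : G)) (1 : A)) =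
        Ψ (Finsupp.single (QuotientGroup.mk (1 : G)) (1 : A)) := hEq
    refine Finsupp.lhom_ext fun c a => ?_
    rw [SkewHecke.apply_single H α hs Φ hΦ, SkewHecke.apply_single H α hs Ψ hΨ, h']
  · -- surjective
    intro m hm
    exact ⟨SkewHecke.mkEnd H α s m,
      fun g n => SkewHecke.mkEnd_equivariant H α hs hm g n,
      SkewHecke.mkEnd_e H α hs hm⟩
  · -- additive
    intro Φ Ψ
    exact LinearMap.add_apply Φ Ψ _
  · -- multiplicative (reversed)
    intro Φ Ψ hΦ hΨ
    classical
    set u := Φ (Finsupp.single (QuotientGroup.mk (1 : G)) (1 : A)) with hu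
    set v := Ψ (Finsupp.single (QuotientGroup.mk (1 : G)) (1 : A)) with hv
    show Ψ (Φ _) = SkewHecke.prodF H α s u v
    calc Ψ (Φ (Finsupp.single (QuotientGroup.mk (1 : G)) (1 : A)))
        = Ψ (∑ c : G ⧸ H, Finsupp.single c (u c)) := by
          rw [← hu, ← SkewHecke.eq_sum_single]
      _ = ∑ c : G ⧸ H, Ψ (Finsupp.single c (u c)) := map_sum Ψ _ _
      _ = ∑ c : G ⧸ H, u c • SkewHecke.gAct H α (s c) v := by
          exact Finset.sum_congr rfl fun c _ =>
            SkewHecke.apply_single H α hs Ψ hΨ c (u c)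
      _ = ∑ c : G ⧸ H, ∑ d : G ⧸ H,
            Finsupp.single ((s c) • d) (u c * α (s c) (v d)) := by
          refine Finset.sum_congr rfl fun c _ => ?_
          rw [SkewHecke.gAct_fintypeSum, Finset.smul_sum]
          refine Finset.sum_congr rfl fun d _ => ?_
          rw [Finsupp.smul_single, smul_eq_mul]
      _ = SkewHecke.prodF H α s u v := rfl
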